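/- Let b > 1 be a real number, let h₀, r, ν be real numbers, let s > 0 and q > 0 be real numbers (the pump's relative speed and flow), and let hᵢ, hⱼ be real numbers. Then the pump head-gain equation hᵢ − hⱼ = −s²·(h₀ − r·(q/s)^ν) holds if and only if b^(hᵢ) · (b^(hⱼ))⁻¹ = (b^s)^(−s·h₀) · (b^q)^( r · q^(ν−1) · s^(2−ν) ), where all powers are real exponentiation of positive reals. -/
import Mathlib


theorem pump_headgain_iff_monomial
    (b : ℝ) (hb : 1 < b) (h₀ r ν : ℝ)
    (s q : ℝ) (hs : 0 < s) (hq : 0 < q)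
    (hi hj : ℝ) :
    hi - hj = -(s ^ 2) * (h₀ - r * (q / s) ^ ν) ↔
      b ^ hi * (b ^ hj)⁻¹ =
        (b ^ s) ^ (-(s * h₀)) * (b ^ q) ^ (r * q ^ (ν - 1) * s ^ (2 - ν)) := by
  have hb0 : (0:ℝ) < b := lt_trans one_pos hb
  have key : ∀ x y : ℝ, b ^ x = b ^ y ↔ x = y := by
    intro x y
    rw [le_antisymm_iff, le_antisymm_iff, Real.rpow_le_rpow_left_iff hb,
      Real.rpow_le_rpow_left_iff hb]
  rw [← Real.rpow_neg_one (b ^ hj), ← Real.rpow_mul hb0.le,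
    ← Real.rpow_mul hb0.le, ← Real.rpow_mul hb0.le, ← Real.rpow_add hb0,
    ← Real.rpow_add hb0, key]
  have e : s * -(s * h₀) + q * (r * q ^ (ν - 1) * s ^ (2 - ν)) =
      -(s ^ 2) * (h₀ - r * (q / s) ^ ν) := by
    have hsν : (0:ℝ) < s ^ ν := Real.rpow_pos_of_pos hs ν
    rw [Real.div_rpow hq.le hs.le, Real.rpow_sub hq, Real.rpow_sub hs, Real.rpow_one,
      show s ^ (2:ℝ) = s ^ 2 from Real.rpow_two s]
    field_simp
    ring
  rw [e]
  constructor <;> intro h <;> linarith
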